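/- Let (F, D₀, τ₀) be a field with derivation D₀ and injective endomorphism τ₀ satisfying D₀τ₀ = s·τ₀D₀ for some s ∈ F^×. Let r ∈ F^×, and suppose there exists g ∈ F satisfying τ₀²(sr)·τ₀(s)·s·τ₀³(g) + (τ₀(r)+1)·τ₀(s)·s·τ₀²(g) − (τ₀(r)+1)·s·τ₀(g) − r·g + s·τ₀(D₀(r)/r) = 0. Define R = g·Y² − (τ₀(sr)·s·τ₀²(g) + s·τ₀(g) − r·g + D₀(r)/r)·Y − s·r·τ₀(g) ∈ F[Y]. Then for f transcendental over F, the unique derivation D on F(f) extending D₀ with D(f) = −R(f), together with the endomorphism τ of F(f) extending τ₀ with τ(f) = 1 + r/f, satisfy D∘τ = s·τ∘D on F(f). -/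

import Mathlib

lemma aux13 {K : Type*} [CommRing K] (x dr rr gg aa bb ss tg ta tb : K)
    (c2 : rr*gg + ss*tg - ss*ta - ss*tb = 0)
    (c1 : dr - rr*aa + 2*ss*rr*tg - ss*rr*ta = 0)
    (c0 : -rr*bb + ss*tg*rr^2 = 0) :
    dr*x + rr*(gg*x^2 - aa*x - bb) + ss*(tg*(x+rr)^2 - ta*x*(x+rr) - tb*x^2) = 0 := by
  linear_combination x^2*c2 + x*c1 + c0

theorem stmt13 {F : Type*} [Field F] [CharZero F]
    (D₀ : F → F)
    (hD₀add : ∀ x y : F, D₀ (x + y) = D₀ x + D₀ y)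
    (hD₀mul : ∀ x y : F, D₀ (x * y) = D₀ x * y + x * D₀ y)
    (τ₀ : F →+* F) (hτ₀ : Function.Injective τ₀)
    (s r : F) (hs : s ≠ 0) (hr : r ≠ 0)
    -- the twisted commutation `D₀∘τ₀ = s·(τ₀∘D₀)` on `F`
    (hcomm₀ : ∀ x : F, D₀ (τ₀ x) = s * τ₀ (D₀ x))
    (g : F)
    (hg : τ₀ (τ₀ (s * r)) * τ₀ s * s * τ₀ (τ₀ (τ₀ g))
        + (τ₀ r + 1) * τ₀ s * s * τ₀ (τ₀ g)
        - (τ₀ r + 1) * s * τ₀ g - r * g + s * τ₀ (D₀ r / r) = 0)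
    (R : Polynomial F)
    (hR : R = Polynomial.C g * Polynomial.X ^ 2
        - Polynomial.C (τ₀ (s * r) * s * τ₀ (τ₀ g) + s * τ₀ g - r * g + D₀ r / r)
            * Polynomial.X
        - Polynomial.C (s * r * τ₀ g))
    -- `D` is the derivation of `F(f)` extending `D₀` with `D f = -R(f)`
    (D : RatFunc F → RatFunc F)
    (hDadd : ∀ x y : RatFunc F, D (x + y) = D x + D y)
    (hDmul : ∀ x y : RatFunc F, D (x * y) = D x * y + x * D y)
    (hDF : ∀ x : F, D (algebraMap F (RatFunc F) x) = algebraMap F (RatFunc F) (D₀ x))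
    (hDf : D RatFunc.X = -(Polynomial.aeval (RatFunc.X : RatFunc F) R))
    -- `τ` is the endomorphism of `F(f)` extending `τ₀` with `τ f = 1 + r/f`
    (τ : RatFunc F →+* RatFunc F)
    (hτF : ∀ x : F, τ (algebraMap F (RatFunc F) x) = algebraMap F (RatFunc F) (τ₀ x))
    (hτf : τ RatFunc.X = 1 + algebraMap F (RatFunc F) r / RatFunc.X) :
    ∀ x : RatFunc F, D (τ x) = algebraMap F (RatFunc F) s * τ (D x) := by
  set φ := algebraMap F (RatFunc F) with hφ
  set A := τ₀ (s * r) * s * τ₀ (τ₀ g) + s * τ₀ g - r * g + D₀ r / r with hA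
  set B := s * r * τ₀ g with hB
  have hX : (RatFunc.X : RatFunc F) ≠ 0 := RatFunc.X_ne_zero
  -- basic facts about D
  have hD1 : D 1 = 0 := by
    have h := hDmul 1 1
    simp only [mul_one, one_mul] at h
    exact right_eq_add.mp h
  have hDXinv : D (RatFunc.X : RatFunc F)⁻¹ = -(D RatFunc.X) * ((RatFunc.X : RatFunc F)⁻¹)^2 := by
    have h := hDmul RatFunc.X (RatFunc.X)⁻¹
    rw [mul_inv_cancel₀ hX, hD1] at h
    have e : RatFunc.X * (-(D RatFunc.X) * ((RatFunc.X : RatFunc F)⁻¹)^2) = -(D RatFunc.X * (RatFunc.X : RatFunc F)⁻¹) := by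
      field_simp
    apply mul_left_cancel₀ hX
    rw [e]
    linear_combination -h
  -- value of D at X
  have hDX : D RatFunc.X = -(φ g * RatFunc.X^2 - φ A * RatFunc.X - φ B) := by
    rw [hDf, hR]
    simp only [map_sub, map_mul, map_pow, Polynomial.aeval_X, Polynomial.aeval_C, hφ]
  -- coefficient identities in F
  have hτr : τ₀ r ≠ 0 := fun h => hr (hτ₀ (by simpa using h))
  have hdr : r * (D₀ r / r) = D₀ r := by field_simp
  have hg' := hg
  simp only [map_mul, map_div₀] at hg'
  have hc0 : -r*B + s*(τ₀ g)*r^2 = 0 := by rw [hB]; ring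
  have hc2 : r*g + s*(τ₀ g) - s*(τ₀ A) - s*(τ₀ B) = 0 := by
    rw [hA, hB]; simp only [map_mul, map_add, map_sub, map_div₀]
    linear_combination (-1 : F) * hg'
  have hc1 : D₀ r - r*A + 2*s*r*(τ₀ g) - s*r*(τ₀ A) = 0 := by
    rw [hA]; simp only [map_mul, map_add, map_sub, map_div₀]
    linear_combination (-r) * hg' - hdr
  have hc0' : -(φ r)*(φ B) + (φ s)*(φ (τ₀ g))*(φ r)^2 = 0 := by
    have h := congrArg φ hc0
    simpa only [map_add, map_sub, map_mul, map_neg, map_pow, map_zero] using h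
  have hc2' : (φ r)*(φ g) + (φ s)*(φ (τ₀ g)) - (φ s)*(φ (τ₀ A)) - (φ s)*(φ (τ₀ B)) = 0 := by
    have h := congrArg φ hc2
    simpa only [map_add, map_sub, map_mul, map_zero] using h
  have hc1' : φ (D₀ r) - (φ r)*(φ A) + 2*(φ s)*(φ r)*(φ (τ₀ g)) - (φ s)*(φ r)*(φ (τ₀ A)) = 0 := by
    have h := congrArg φ hc1
    simpa only [map_add, map_sub, map_mul, map_zero, map_ofNat] using h
  have main := aux13 (RatFunc.X : RatFunc F) (φ (D₀ r)) (φ r) (φ g) (φ A) (φ B) (φ s)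
    (φ (τ₀ g)) (φ (τ₀ A)) (φ (τ₀ B)) hc2' hc1' hc0'
  -- the key identity at X
  have hΔX : D (τ RatFunc.X) = φ s * τ (D RatFunc.X) := by
    have hτDX : τ (D RatFunc.X) =
        -(φ (τ₀ g) * (1 + φ r / RatFunc.X)^2 - φ (τ₀ A) * (1 + φ r / RatFunc.X) - φ (τ₀ B)) := by
      rw [hDX]
      simp only [map_neg, map_sub, map_mul, map_pow, hτF, hτf]
    have hDτX : D (τ RatFunc.X) =
        φ (D₀ r) * (RatFunc.X : RatFunc F)⁻¹
          + φ r * (-(D RatFunc.X) * ((RatFunc.X : RatFunc F)⁻¹)^2) := by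
      rw [hτf, div_eq_mul_inv, hDadd, hD1, hDmul, hDF, hDXinv]
      ring
    rw [hDτX, hτDX, hDX]
    field_simp
    linear_combination main
  -- the twisted difference operator
  set Δ : RatFunc F → RatFunc F := fun x => D (τ x) - φ s * τ (D x) with hΔ
  have hΔadd : ∀ x y, Δ (x + y) = Δ x + Δ y := by
    intro x y
    simp only [hΔ, map_add, hDadd]
    ring
  have hΔmul : ∀ x y, Δ (x * y) = Δ x * τ y + τ x * Δ y := by
    intro x y
    simp only [hΔ, map_mul, hDmul, map_add]
    ring
  have hΔF : ∀ a : F, Δ (φ a) = 0 := by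
    intro a
    simp only [hΔ, hτF, hDF, hcomm₀, map_mul]
    ring
  have hΔX' : Δ RatFunc.X = 0 := by
    simp only [hΔ]
    rw [hΔX]; ring
  have hΔXpow : ∀ n : ℕ, Δ (RatFunc.X ^ n) = 0 := by
    intro n
    induction n with
    | zero => simpa using hΔF 1
    | succ n ih =>
      rw [pow_succ, hΔmul, ih, hΔX']
      ring
  have hΔpoly : ∀ p : Polynomial F, Δ (algebraMap (Polynomial F) (RatFunc F) p) = 0 := by
    intro p
    induction p using Polynomial.induction_on' with
    | add p q hp hq => rw [map_add, hΔadd, hp, hq, add_zero]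
    | monomial n a =>
      rw [← Polynomial.C_mul_X_pow_eq_monomial, map_mul, map_pow,
        RatFunc.algebraMap_C, RatFunc.algebraMap_X, hΔmul, hΔXpow,
        ← RatFunc.algebraMap_eq_C, ← hφ, hΔF]
      ring
  -- injectivity of τ
  have hτinj : Function.Injective τ := τ.injective
  have hτne : ∀ x : RatFunc F, x ≠ 0 → τ x ≠ 0 := by
    intro x hx h
    exact hx (hτinj (by simpa using h))
  -- conclude for all rational functions
  have hΔall : ∀ x : RatFunc F, Δ x = 0 := by
    intro x
    induction x using RatFunc.induction_on with
    | f p q hq =>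
      set u := algebraMap (Polynomial F) (RatFunc F) p with hu
      set v := algebraMap (Polynomial F) (RatFunc F) q with hv
      have hvne : v ≠ 0 := RatFunc.algebraMap_ne_zero hq
      have h1 : u / v * v = u := div_mul_cancel₀ u hvne
      have h2 := hΔmul (u / v) v
      rw [h1, hΔpoly p, hΔpoly q, mul_zero, add_zero] at h2
      have h3 : Δ (u / v) * τ v = 0 := h2.symm
      rcases mul_eq_zero.mp h3 with h | h
      · exact h
      · exact absurd h (hτne v hvne)
  intro x
  have h := hΔall x
  simp only [hΔ] at h
  exact sub_eq_zero.mp h
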